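/- For H = (px²+py²+pz²)/2 + k1/r + k2/x² + k3/y² + k4/z², k2 ≥ 0, the quartic function K_4x = R_x² + (2k2/x²)·(x·px + y·py + z·pz)², with R_x = (z·px−x·pz)·pz − (x·py−y·px)·py − x·(k1/r + 2k2/x² + 2k3/y² + 2k4/z²), satisfies {K_4x, H} = 0. -/

import Mathlib

noncomputable section

/-- Phase space ℝ⁶ with coordinates (x,y,z,px,py,pz). -/
abbrev Pt := Fin 6 → ℝ

/-- Standard basis vector. -/
def e (j : Fin 6) : Pt := Pi.single j 1

/-- Canonical Poisson bracket on ℝ⁶: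
{F,G} = Σᵢ (∂F/∂qᵢ ∂G/∂pᵢ − ∂F/∂pᵢ ∂G/∂qᵢ). -/
def pb (F G : Pt → ℝ) (q : Pt) : ℝ :=
    (fderiv ℝ F q (e 0)) * (fderiv ℝ G q (e 3)) - (fderiv ℝ F q (e 3)) * (fderiv ℝ G q (e 0))
  + (fderiv ℝ F q (e 1)) * (fderiv ℝ G q (e 4)) - (fderiv ℝ F q (e 4)) * (fderiv ℝ G q (e 1))
  + (fderiv ℝ F q (e 2)) * (fderiv ℝ G q (e 5)) - (fderiv ℝ F q (e 5)) * (fderiv ℝ G q (e 2))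

/-- H = (px²+py²+pz²)/2 + k1/r + k2/x² + k3/y² + k4/z², r = √(x²+y²+z²). -/
def Ham (k1 k2 k3 k4 : ℝ) (q : Pt) : ℝ :=
  (q 3 ^ 2 + q 4 ^ 2 + q 5 ^ 2) / 2 + k1 / Real.sqrt (q 0 ^ 2 + q 1 ^ 2 + q 2 ^ 2)
    + k2 / q 0 ^ 2 + k3 / q 1 ^ 2 + k4 / q 2 ^ 2

/-- R_x = (J2 pz − J3 py) − x·(k1/r + 2k2/x² + 2k3/y² + 2k4/z²),
with J2 = z px − x pz, J3 = x py − y px. -/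
def Rx (k1 k2 k3 k4 : ℝ) (q : Pt) : ℝ :=
  ((q 2 * q 3 - q 0 * q 5) * q 5 - (q 0 * q 4 - q 1 * q 3) * q 4)
    - q 0 * (k1 / Real.sqrt (q 0 ^ 2 + q 1 ^ 2 + q 2 ^ 2)
        + 2 * k2 / q 0 ^ 2 + 2 * k3 / q 1 ^ 2 + 2 * k4 / q 2 ^ 2)

/-- K_4x = R_x² + (2k2/x²)(x px + y py + z pz)². -/
def K4x (k1 k2 k3 k4 : ℝ) (q : Pt) : ℝ :=
  (Rx k1 k2 k3 k4 q) ^ 2 + (2 * k2 / q 0 ^ 2) * (q 0 * q 3 + q 1 * q 4 + q 2 * q 5) ^ 2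

set_option maxHeartbeats 4000000 in
theorem stmt16 (k1 k2 k3 k4 : ℝ) (hk2 : k2 ≥ 0) :
    ∀ q : Pt, q 0 ≠ 0 → q 1 ≠ 0 → q 2 ≠ 0 →
      pb (K4x k1 k2 k3 k4) (Ham k1 k2 k3 k4) q = 0 := by
  intro q hx hy hz
  have hs : (0:ℝ) < q 0 ^ 2 + q 1 ^ 2 + q 2 ^ 2 := by positivity
  have hsne : q 0 ^ 2 + q 1 ^ 2 + q 2 ^ 2 ≠ 0 := ne_of_gt hs
  have hrpos : 0 < Real.sqrt (q 0 ^ 2 + q 1 ^ 2 + q 2 ^ 2) := Real.sqrt_pos.2 hs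
  have hrne : Real.sqrt (q 0 ^ 2 + q 1 ^ 2 + q 2 ^ 2) ≠ 0 := ne_of_gt hrpos
  have h0 := hasFDerivAt_apply (𝕜 := ℝ) (0 : Fin 6) q
  have h1 := hasFDerivAt_apply (𝕜 := ℝ) (1 : Fin 6) q
  have h2 := hasFDerivAt_apply (𝕜 := ℝ) (2 : Fin 6) q
  have h3 := hasFDerivAt_apply (𝕜 := ℝ) (3 : Fin 6) q
  have h4 := hasFDerivAt_apply (𝕜 := ℝ) (4 : Fin 6) q
  have h5 := hasFDerivAt_apply (𝕜 := ℝ) (5 : Fin 6) q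
  have hx2 : HasFDerivAt (fun p : Pt => p 0 ^ 2) _ q :=
    (hasDerivAt_pow 2 (q 0)).comp_hasFDerivAt (h₂ := fun x : ℝ => x ^ 2) q h0
  have hy2 : HasFDerivAt (fun p : Pt => p 1 ^ 2) _ q :=
    (hasDerivAt_pow 2 (q 1)).comp_hasFDerivAt (h₂ := fun x : ℝ => x ^ 2) q h1
  have hz2 : HasFDerivAt (fun p : Pt => p 2 ^ 2) _ q :=
    (hasDerivAt_pow 2 (q 2)).comp_hasFDerivAt (h₂ := fun x : ℝ => x ^ 2) q h2
  have hS : HasFDerivAt (fun p : Pt => p 0 ^ 2 + p 1 ^ 2 + p 2 ^ 2) _ q :=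
    (hx2.add hy2).add hz2
  have hr : HasFDerivAt (fun p : Pt => Real.sqrt (p 0 ^ 2 + p 1 ^ 2 + p 2 ^ 2)) _ q :=
    (Real.hasDerivAt_sqrt hsne).comp_hasFDerivAt (h₂ := Real.sqrt) q hS
  have hinvr : HasFDerivAt
      (fun p : Pt => k1 / Real.sqrt (p 0 ^ 2 + p 1 ^ 2 + p 2 ^ 2)) _ q :=
    (hasFDerivAt_const k1 q).mul ((hasDerivAt_inv hrne).comp_hasFDerivAt q hr)
  have hk2x : HasFDerivAt (fun p : Pt => k2 / p 0 ^ 2) _ q :=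
    (hasFDerivAt_const k2 q).mul
      ((hasDerivAt_inv (pow_ne_zero 2 hx)).comp_hasFDerivAt (h₂ := fun x : ℝ => x⁻¹) q hx2)
  have hk3y : HasFDerivAt (fun p : Pt => k3 / p 1 ^ 2) _ q :=
    (hasFDerivAt_const k3 q).mul
      ((hasDerivAt_inv (pow_ne_zero 2 hy)).comp_hasFDerivAt (h₂ := fun x : ℝ => x⁻¹) q hy2)
  have hk4z : HasFDerivAt (fun p : Pt => k4 / p 2 ^ 2) _ q :=
    (hasFDerivAt_const k4 q).mul
      ((hasDerivAt_inv (pow_ne_zero 2 hz)).comp_hasFDerivAt (h₂ := fun x : ℝ => x⁻¹) q hz2)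
  have h2k2x : HasFDerivAt (fun p : Pt => 2 * k2 / p 0 ^ 2) _ q :=
    (hasFDerivAt_const (2 * k2) q).mul
      ((hasDerivAt_inv (pow_ne_zero 2 hx)).comp_hasFDerivAt (h₂ := fun x : ℝ => x⁻¹) q hx2)
  have h2k3y : HasFDerivAt (fun p : Pt => 2 * k3 / p 1 ^ 2) _ q :=
    (hasFDerivAt_const (2 * k3) q).mul
      ((hasDerivAt_inv (pow_ne_zero 2 hy)).comp_hasFDerivAt (h₂ := fun x : ℝ => x⁻¹) q hy2)
  have h2k4z : HasFDerivAt (fun p : Pt => 2 * k4 / p 2 ^ 2) _ q :=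
    (hasFDerivAt_const (2 * k4) q).mul
      ((hasDerivAt_inv (pow_ne_zero 2 hz)).comp_hasFDerivAt (h₂ := fun x : ℝ => x⁻¹) q hz2)
  have hkin : HasFDerivAt (fun p : Pt => (p 3 ^ 2 + p 4 ^ 2 + p 5 ^ 2) / 2) _ q :=
    ((((hasDerivAt_pow 2 (q 3)).comp_hasFDerivAt (h₂ := fun x : ℝ => x ^ 2) q h3).add
      ((hasDerivAt_pow 2 (q 4)).comp_hasFDerivAt (h₂ := fun x : ℝ => x ^ 2) q h4)).add
      ((hasDerivAt_pow 2 (q 5)).comp_hasFDerivAt (h₂ := fun x : ℝ => x ^ 2) q h5)).mul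
      ((hasFDerivAt_const ((2:ℝ)⁻¹) q))
  have hH : HasFDerivAt (Ham k1 k2 k3 k4) _ q :=
    (((hkin.add hinvr).add hk2x).add hk3y).add hk4z
  have hJ : HasFDerivAt
      (fun p : Pt => (p 2 * p 3 - p 0 * p 5) * p 5 - (p 0 * p 4 - p 1 * p 3) * p 4) _ q :=
    (((h2.mul h3).sub (h0.mul h5)).mul h5).sub (((h0.mul h4).sub (h1.mul h3)).mul h4)
  have hU : HasFDerivAt
      (fun p : Pt => k1 / Real.sqrt (p 0 ^ 2 + p 1 ^ 2 + p 2 ^ 2)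
        + 2 * k2 / p 0 ^ 2 + 2 * k3 / p 1 ^ 2 + 2 * k4 / p 2 ^ 2) _ q :=
    ((hinvr.add h2k2x).add h2k3y).add h2k4z
  have hRx : HasFDerivAt (Rx k1 k2 k3 k4) _ q := hJ.sub (h0.mul hU)
  have hdot : HasFDerivAt (fun p : Pt => p 0 * p 3 + p 1 * p 4 + p 2 * p 5) _ q :=
    ((h0.mul h3).add (h1.mul h4)).add (h2.mul h5)
  have hK : HasFDerivAt (K4x k1 k2 k3 k4) _ q :=
    ((hasDerivAt_pow 2 (Rx k1 k2 k3 k4 q)).comp_hasFDerivAt (h₂ := fun x : ℝ => x ^ 2) q hRx).add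
      (h2k2x.mul ((hasDerivAt_pow 2 (q 0 * q 3 + q 1 * q 4 + q 2 * q 5)).comp_hasFDerivAt (h₂ := fun x : ℝ => x ^ 2) q hdot))
  unfold pb
  rw [hK.fderiv, hH.fderiv]
  simp only [ContinuousLinearMap.add_apply, ContinuousLinearMap.sub_apply,
    ContinuousLinearMap.smul_apply, ContinuousLinearMap.coe_sub', Pi.sub_apply,
    ContinuousLinearMap.coe_smul', Pi.smul_apply, ContinuousLinearMap.zero_apply,
    ContinuousLinearMap.proj_apply, smul_eq_mul, e, Pi.single_apply]
  simp only [Fin.reduceEq, reduceIte]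
  norm_num
  simp only [Rx]
  set r := Real.sqrt (q 0 ^ 2 + q 1 ^ 2 + q 2 ^ 2) with hrdef
  have hr2 : r ^ 2 = q 0 ^ 2 + q 1 ^ 2 + q 2 ^ 2 := Real.sq_sqrt hs.le
  field_simp
  linear_combination (((-4 : ℝ) * q 0 ^ 2 * q 1 ^ 5 * q 2 ^ 6 * q 5 * r * k1 * k2 +
      (-4 : ℝ) * q 0 ^ 2 * q 1 ^ 6 * q 2 ^ 5 * q 4 * r * k1 * k2 +
      (-2 : ℝ) * q 0 ^ 4 * q 1 ^ 5 * q 2 ^ 6 * q 3 ^ 2 * q 5 * r * k1 +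
      (-2 : ℝ) * q 0 ^ 4 * q 1 ^ 6 * q 2 ^ 5 * q 3 ^ 2 * q 4 * r * k1 +
      (4 : ℝ) * q 0 ^ 5 * q 1 ^ 3 * q 2 ^ 5 * q 3 * r * k1 * k3 +
      (4 : ℝ) * q 0 ^ 5 * q 1 ^ 5 * q 2 ^ 3 * q 3 * r * k1 * k4 +
      (2 : ℝ) * q 0 ^ 5 * q 1 ^ 5 * q 2 ^ 5 * q 3 * k1 ^ 2 +
      (2 : ℝ) * q 0 ^ 5 * q 1 ^ 5 * q 2 ^ 5 * q 3 * q 5 ^ 2 * r * k1 +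
      (2 : ℝ) * q 0 ^ 5 * q 1 ^ 5 * q 2 ^ 5 * q 3 * q 4 ^ 2 * r * k1)) * hr2
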